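/- arXiv:2001.06711 — 8 statements merged into one kernel-verified Lean document; each statement's English description precedes it below -/
import Mathlib

section
/- Let G be a finite group and S a subgroup of G of order k and index n, with distinct right cosets Sg₁,…,Sgₙ. Suppose sets L₁,…,L_k partition G into complete sets of left coset representatives of S in G (each Lᵢ contains exactly one element from each left coset of S). Then the Cayley table of G with block-columns labeled by the right cosets Sgⱼ and block-rows labeled by the sets Lᵢ is a Cayley-Sudoku table: for each i and j, the set of products {l·c : l ∈ Lᵢ, c ∈ Sgⱼ} equals G, with each element appearing exactly once. -/
/-- `L` is a complete set of left coset representatives of `S` in `G`: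
it contains exactly one element of each left coset `xS`. -/
def CompleteLeftReps {G : Type*} [Group G] (S : Subgroup G) (L : Set G) : Prop :=
  ∀ x : G, ∃! l : G, l ∈ L ∧ x⁻¹ * l ∈ S

theorem construction1R {G : Type*} [Group G] [Fintype G] (S : Subgroup G) (k n : ℕ)
    (hk : Nat.card S = k) (hn : S.index = n)
    (L : Fin k → Set G)
    (hpart : ∀ g : G, ∃! i : Fin k, g ∈ L i)
    (hrep : ∀ i : Fin k, CompleteLeftReps S (L i)) :
    ∀ (i : Fin k) (g : G),
      Function.Bijective
        (fun p : (L i) × ((fun s : G => s * g) '' (S : Set G)) =>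
          (p.1 : G) * (p.2 : G)) := by
  intro i g
  constructor
  · rintro ⟨⟨l₁, hl₁⟩, ⟨c₁, hc₁⟩⟩ ⟨⟨l₂, hl₂⟩, ⟨c₂, hc₂⟩⟩ h
    simp only at h
    obtain ⟨s₁, hs₁, rfl⟩ := hc₁
    obtain ⟨s₂, hs₂, rfl⟩ := hc₂
    have hcc : l₁ * (s₁ * g) = l₂ * (s₂ * g) := h
    have hy : l₁ * s₁ = l₂ * s₂ := by
      have := hcc
      group at this ⊢
      simp only [mul_left_inj] at this
      exact this
    obtain ⟨l, ⟨_, hu⟩⟩ := hrep i (l₁ * s₁)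
    have h1 : l₁ = l := hu l₁ ⟨hl₁, by
      have : (l₁ * s₁)⁻¹ * l₁ = s₁⁻¹ := by group
      rw [this]; exact S.inv_mem hs₁⟩
    have h2 : l₂ = l := hu l₂ ⟨hl₂, by
      have : (l₁ * s₁)⁻¹ * l₂ = s₂⁻¹ := by rw [hy]; group
      rw [this]; exact S.inv_mem hs₂⟩
    have hll : l₁ = l₂ := h1.trans h2.symm
    subst hll
    have hs : s₁ = s₂ := by
      have := mul_left_cancel hy
      exact this
    subst hs
    rfl
  · intro x
    obtain ⟨l, ⟨⟨hlL, hlS⟩, _⟩⟩ := hrep i (x * g⁻¹)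
    have hs : l⁻¹ * (x * g⁻¹) ∈ S := by
      have : l⁻¹ * (x * g⁻¹) = ((x * g⁻¹)⁻¹ * l)⁻¹ := by group
      rw [this]; exact S.inv_mem hlS
    refine ⟨⟨⟨l, hlL⟩, ⟨l⁻¹ * (x * g⁻¹) * g, ⟨l⁻¹ * (x * g⁻¹), hs, rfl⟩⟩⟩, ?_⟩
    simp only
    group
end

section
/- Let G be a finite group and S a subgroup of G. If sets L₁,…,L_k partition G and each Lᵢ is a complete set of left coset representatives of every conjugate S^g = g⁻¹Sg for all g ∈ G, then for each i and each left coset yS of S, the multiplication map Lᵢ × yS → G, (l, c) ↦ lc, is a bijection. -/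
/-- The conjugate subgroup `g⁻¹ S g`. -/
def conjBy {G : Type*} [Group G] (S : Subgroup G) (g : G) : Subgroup G :=
  S.map (MulAut.conj g⁻¹).toMonoidHom

lemma mem_conjBy_inv {G : Type*} [Group G] (S : Subgroup G) (y x : G) :
    x ∈ conjBy S y⁻¹ ↔ ∃ s ∈ S, y * s * y⁻¹ = x := by
  simp [conjBy, Subgroup.mem_map, MulAut.conj]

theorem construction2L_if {G : Type*} [Group G] [Fintype G] (S : Subgroup G) (k : ℕ)
    (L : Fin k → Set G)
    (hpart : ∀ g : G, ∃! i : Fin k, g ∈ L i)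
    (hrep : ∀ (i : Fin k) (g : G), CompleteLeftReps (conjBy S g) (L i)) :
    ∀ (i : Fin k) (y : G),
      Function.Bijective
        (fun p : (L i) × ((fun s : G => y * s) '' (S : Set G)) =>
          (p.1 : G) * (p.2 : G)) := by
  intro i y
  constructor
  · rintro ⟨⟨l₁, hl₁⟩, ⟨c₁, s₁, hs₁, rfl⟩⟩ ⟨⟨l₂, hl₂⟩, ⟨c₂, s₂, hs₂, rfl⟩⟩ h
    simp only at h
    have h' : l₁ * (y * s₁) = l₂ * (y * s₂) := h
    obtain ⟨l, _, huniq⟩ := hrep i y⁻¹ (l₁ * (y * s₁) * y⁻¹)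
    have e₁ : l₁ = l := by
      refine huniq l₁ ⟨hl₁, (mem_conjBy_inv S y _).mpr ⟨s₁⁻¹, S.inv_mem hs₁, by group⟩⟩
    have e₂ : l₂ = l := by
      refine huniq l₂ ⟨hl₂, (mem_conjBy_inv S y _).mpr ⟨s₂⁻¹, S.inv_mem hs₂, ?_⟩⟩
      rw [h']; group
    have hll : l₁ = l₂ := e₁.trans e₂.symm
    subst hll
    have hc : y * s₁ = y * s₂ := by
      exact mul_left_cancel h'
    simp [Subtype.ext_iff, hc]
  · intro x
    obtain ⟨l, ⟨hlL, hls⟩, _⟩ := hrep i y⁻¹ (x * y⁻¹)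
    obtain ⟨s, hs, heq⟩ := (mem_conjBy_inv S y _).mp hls
    refine ⟨⟨⟨l, hlL⟩, ⟨y * s⁻¹, ⟨s⁻¹, S.inv_mem hs, rfl⟩⟩⟩, ?_⟩
    simp only
    have : y * s * y⁻¹ = (x * y⁻¹)⁻¹ * l := heq
    have hx : l = x * y⁻¹ * (y * s * y⁻¹) := by rw [this]; group
    rw [hx]; group
end

section
/- Let G be a finite group and S a subgroup of G of index n. Suppose L is a set of size n such that for each left coset yS of S, the map L × yS → G, (l, c) ↦ lc, is a bijection onto G when ranged over all cosets simultaneously (i.e., each g ∈ G is written uniquely as lc with l ∈ L, c ∈ yS). Then L is a complete set of left coset representatives of S^g for every g ∈ G. -/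
theorem construction2L_only_if {G : Type*} [Group G] [Fintype G] (S : Subgroup G)
    (n : ℕ) (hn : S.index = n) (L : Set G) (hL : Nat.card L = n)
    (hbij : ∀ y : G,
      Function.Bijective
        (fun p : L × ((fun s : G => y * s) '' (S : Set G)) =>
          (p.1 : G) * (p.2 : G))) :
    ∀ g : G, CompleteLeftReps (conjBy S g) L := by
  intro g x
  obtain ⟨hinj, hsurj⟩ := hbij g⁻¹
  obtain ⟨⟨l, c⟩, hp⟩ := hsurj (x * g⁻¹)
  simp only at hp
  obtain ⟨s, hs, hsc⟩ := c.2
  refine ⟨(l : G), ⟨l.2, ?_⟩, ?_⟩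
  · refine ⟨s⁻¹, inv_mem hs, ?_⟩
    have hc : (c : G) = g⁻¹ * s := hsc.symm
    have : (l : G) = x * g⁻¹ * (c : G)⁻¹ := by
      rw [← hp]; group
    simp [this, hc, MulAut.conj]
    group
  · rintro l' ⟨hl', t, ht, htval⟩
    have htval' : g⁻¹ * t * g = x⁻¹ * l' := by
      simpa [MulAut.conj] using htval
    have hmem : g⁻¹ * t⁻¹ ∈ (fun s : G => g⁻¹ * s) '' (S : Set G) :=
      ⟨t⁻¹, inv_mem ht, rfl⟩
    have heq : (fun p : L × ((fun s : G => g⁻¹ * s) '' (S : Set G)) =>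
        (p.1 : G) * (p.2 : G)) (⟨l', hl'⟩, ⟨g⁻¹ * t⁻¹, hmem⟩) =
        (fun p : L × ((fun s : G => g⁻¹ * s) '' (S : Set G)) =>
        (p.1 : G) * (p.2 : G)) (l, c) := by
      have hl'eq : l' = x * (g⁻¹ * t * g) := by
        rw [htval']; group
      simp only [hp, hl'eq]
      group
    have := hinj heq
    have := congrArg (fun p => (p.1 : G)) this
    simpa using this
end

section
/- (Baer's Theorem, converse direction) Let G be a finite group, S ≤ G, and let r₁,…,r_m be a fixed complete set of right coset representatives of S in G. If the operation Srᵢ · Srⱼ := S(rᵢrⱼ) on right cosets of S is a quasigroup operation (has two-sided cancellation), then {r₁,…,r_m} is a complete set of right coset representatives of S^g for every g ∈ G. -/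
/-- `R` is a complete set of right coset representatives of `S` in `G`:
it contains exactly one element of each right coset `Sx`. -/
def CompleteRightReps {G : Type*} [Group G] (S : Subgroup G) (R : Set G) : Prop :=
  ∀ x : G, ∃! r : G, r ∈ R ∧ r * x⁻¹ ∈ S

theorem baer_converse {G : Type*} [Group G] [Fintype G] (S : Subgroup G) (m : ℕ)
    (r : Fin m → G)
    (hS : CompleteRightReps S (Set.range r))
    (hquasi : ∀ i : Fin m,
      Function.Bijective
        (fun j : Fin m => Quotient.mk (QuotientGroup.rightRel S) (r i * r j)) ∧
      Function.Bijective
        (fun j : Fin m => Quotient.mk (QuotientGroup.rightRel S) (r j * r i))) :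
    ∀ g : G, CompleteRightReps (conjBy S g) (Set.range r) := by
  intro g x
  obtain ⟨ri, ⟨⟨i, rfl⟩, his⟩, -⟩ := hS g
  have key : Function.Bijective
      (fun j : Fin m => Quotient.mk (QuotientGroup.rightRel S) (g * r j)) := by
    have heq : (fun j : Fin m => Quotient.mk (QuotientGroup.rightRel S) (g * r j))
        = fun j => Quotient.mk (QuotientGroup.rightRel S) (r i * r j) := by
      funext j
      apply Quotient.sound
      refine QuotientGroup.rightRel_apply.mpr ?_
      have h1 : (r i * r j) * (g * r j)⁻¹ = r i * g⁻¹ := by group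
      rw [h1]
      exact his
    rw [heq]
    exact (hquasi i).1
  obtain ⟨j, hj⟩ := key.2 (Quotient.mk _ (g * x))
  have hj' : (QuotientGroup.rightRel S).r (g * r j) (g * x) := Quotient.exact hj
  rw [QuotientGroup.rightRel_apply] at hj'
  refine ⟨r j, ⟨⟨j, rfl⟩, ?_⟩, ?_⟩
  · refine ⟨g * (r j * x⁻¹) * g⁻¹, ?_, ?_⟩
    · have h2 : g * (r j * x⁻¹) * g⁻¹ = ((g * x) * (g * r j)⁻¹)⁻¹ := by group
      rw [h2]; exact S.inv_mem hj'
    · simp [MulAut.conj]; group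
  · rintro r' ⟨⟨j', rfl⟩, s, hs, hse⟩
    have hse' : r j' * x⁻¹ = g⁻¹ * s * g := by
      rw [← hse]; simp [MulAut.conj]
    have h3 : (fun j : Fin m => Quotient.mk (QuotientGroup.rightRel S) (g * r j)) j'
        = Quotient.mk (QuotientGroup.rightRel S) (g * x) := by
      apply Quotient.sound
      refine QuotientGroup.rightRel_apply.mpr ?_
      have h4 : (g * x) * (g * r j')⁻¹ = (g * (r j' * x⁻¹) * g⁻¹)⁻¹ := by group
      rw [h4, hse']
      have h5 : (g * (g⁻¹ * s * g) * g⁻¹)⁻¹ = s⁻¹ := by group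
      rw [h5]; exact S.inv_mem hs
    exact congrArg r (key.1 (h3.trans hj.symm))
end

section
/- Let G be a finite group, S ≤ G, and suppose R ⊆ G is a complete set of right coset representatives of S^g for all g ∈ G. Then the sets sR := {sr : r ∈ R} for s ∈ S partition G, and each sR is again a complete set of right coset representatives of S^g for all g ∈ G. -/
lemma mem_conjBy {G : Type*} [Group G] {S : Subgroup G} {g z : G} :
    z ∈ conjBy S g ↔ g * z * g⁻¹ ∈ S := by
  constructor
  · rintro ⟨a, ha, rfl⟩
    simpa [MulAut.conj, mul_assoc] using ha
  · intro h
    exact ⟨g * z * g⁻¹, h, by simp [MulAut.conj, mul_assoc]⟩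

theorem translates_of_universal_transversal {G : Type*} [Group G] [Fintype G]
    (S : Subgroup G) (R : Set G)
    (hR : ∀ g : G, CompleteRightReps (conjBy S g) R) :
    (∀ x : G, ∃! s : S, x ∈ (fun t : G => (s : G) * t) '' R) ∧
    (∀ s : S, ∀ g : G, CompleteRightReps (conjBy S g) ((fun t : G => (s : G) * t) '' R)) := by
  constructor
  · intro x
    obtain ⟨r, ⟨hrR, hrS⟩, huniq⟩ := hR 1 x
    rw [mem_conjBy] at hrS
    simp only [one_mul, inv_one, mul_one] at hrS
    have hxr : x * r⁻¹ ∈ S := by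
      have := S.inv_mem hrS
      simpa using this
    refine ⟨⟨x * r⁻¹, hxr⟩, ⟨r, hrR, by group⟩, ?_⟩
    rintro ⟨s, hs⟩ ⟨r', hr'R, hr'⟩
    have heq : r' = r := by
      apply huniq
      refine ⟨hr'R, ?_⟩
      rw [mem_conjBy]
      simp only [one_mul, inv_one, mul_one]
      have h2 : r' * x⁻¹ = s⁻¹ := by rw [← hr']; group
      rw [h2]; exact S.inv_mem hs
    apply Subtype.ext
    show s = x * r⁻¹
    rw [← heq, ← hr']; group
  · intro s g x
    obtain ⟨r, ⟨hrR, hrS⟩, huniq⟩ := hR (g * (s : G)) ((s : G)⁻¹ * x)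
    have key : ∀ y : G, (s : G) * y * x⁻¹ ∈ conjBy S g ↔
        y * ((s : G)⁻¹ * x)⁻¹ ∈ conjBy S (g * (s : G)) := by
      intro y
      rw [mem_conjBy, mem_conjBy]
      have e : g * ((s : G) * y * x⁻¹) * g⁻¹
          = (g * (s : G)) * (y * ((s : G)⁻¹ * x)⁻¹) * (g * (s : G))⁻¹ := by group
      rw [e]
    refine ⟨(s : G) * r, ⟨⟨r, hrR, rfl⟩, (key r).mpr hrS⟩, ?_⟩
    rintro y ⟨⟨r', hr'R, rfl⟩, hy⟩
    have : r' = r := huniq r' ⟨hr'R, (key r').mp hy⟩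
    rw [this]
end

section
/- Let Q₆ be the quasigroup of order 6 whose left translations are λ₁ = id, λ₂ = (123)(456), λ₃ = (132)(465), λ₄ = (14)(2536), λ₅ = (15)(2634), λ₆ = (16)(2435). Then LMult(Q₆) = ⟨λ₁,…,λ₆⟩ is a subgroup of the alternating group A₆, and the stabilizer of the point 1 in LMult(Q₆) has no complement in LMult(Q₆). -/
/-- The Cayley table of the quasigroup `Q₆` (0-indexed): `q6op ℓ q = ℓ·q`.
Its left translations are λ₁ = id, λ₂ = (123)(456), λ₃ = (132)(465),
λ₄ = (14)(2536), λ₅ = (15)(2634), λ₆ = (16)(2435). -/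
def q6op : Fin 6 → Fin 6 → Fin 6 :=
  ![![0, 1, 2, 3, 4, 5],
    ![1, 2, 0, 4, 5, 3],
    ![2, 0, 1, 5, 3, 4],
    ![3, 4, 5, 0, 2, 1],
    ![4, 5, 3, 1, 0, 2],
    ![5, 3, 4, 2, 1, 0]]

/-- The left multiplication group of `Q₆`. -/
def LMultQ6 : Subgroup (Equiv.Perm (Fin 6)) :=
  Subgroup.closure {σ : Equiv.Perm (Fin 6) | ∃ ℓ : Fin 6, ∀ q : Fin 6, σ q = q6op ℓ q}

/-- Inverse tables for the left translations. -/
def q6inv : Fin 6 → Fin 6 → Fin 6 :=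
  ![![0, 1, 2, 3, 4, 5],
    ![2, 0, 1, 5, 3, 4],
    ![1, 2, 0, 4, 5, 3],
    ![3, 5, 4, 0, 1, 2],
    ![4, 3, 5, 2, 0, 1],
    ![5, 4, 3, 1, 2, 0]]

/-- The left translations as permutations. -/
def lam (ℓ : Fin 6) : Equiv.Perm (Fin 6) :=
  ⟨q6op ℓ, q6inv ℓ, by revert ℓ; decide, by revert ℓ; decide⟩

lemma lam_sign : ∀ ℓ, Equiv.Perm.sign (lam ℓ) = 1 := by decide

lemma lam_zero : ∀ ℓ : Fin 6, lam ℓ 0 = ℓ := by decide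

lemma lam_mem (ℓ : Fin 6) : lam ℓ ∈ LMultQ6 :=
  Subgroup.subset_closure ⟨ℓ, fun _ => rfl⟩

theorem q6_lmult_in_A6_and_stabilizer_has_no_complement :
    LMultQ6 ≤ alternatingGroup (Fin 6) ∧
    ¬ ∃ C : Subgroup (Equiv.Perm (Fin 6)),
        C ≤ LMultQ6 ∧
        (∀ g ∈ LMultQ6, ∃ c ∈ C,
          ∃ h ∈ LMultQ6 ⊓ MulAction.stabilizer (Equiv.Perm (Fin 6)) (0 : Fin 6),
            g = c * h) ∧
        C ⊓ (LMultQ6 ⊓ MulAction.stabilizer (Equiv.Perm (Fin 6)) (0 : Fin 6)) = ⊥ := by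
  have hA6 : LMultQ6 ≤ alternatingGroup (Fin 6) := by
    rw [LMultQ6, Subgroup.closure_le]
    rintro σ ⟨ℓ, hσ⟩
    have : σ = lam ℓ := Equiv.ext fun q => hσ q
    show σ ∈ alternatingGroup (Fin 6)
    rw [Equiv.Perm.mem_alternatingGroup, this]
    exact lam_sign ℓ
  refine ⟨hA6, ?_⟩
  rintro ⟨C, hCle, hfac, hdisj⟩
  -- the orbit map `C → Fin 6`, `c ↦ c 0`, is bijective
  have hinj : Function.Injective (fun c : C => (c : Equiv.Perm (Fin 6)) 0) := by
    intro c₁ c₂ h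
    have hfix : ((c₂⁻¹ * c₁ : C) : Equiv.Perm (Fin 6)) 0 = 0 := by
      simp only [Subgroup.coe_mul, Equiv.Perm.mul_apply]
      simp only at h
      rw [h]
      exact Equiv.symm_apply_apply _ _
    have hmem : (c₂⁻¹ * c₁ : C) = 1 := by
      have : ((c₂⁻¹ * c₁ : C) : Equiv.Perm (Fin 6)) ∈
          C ⊓ (LMultQ6 ⊓ MulAction.stabilizer (Equiv.Perm (Fin 6)) (0 : Fin 6)) :=
        ⟨(c₂⁻¹ * c₁ : C).2, hCle (c₂⁻¹ * c₁ : C).2, hfix⟩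
      rw [hdisj, Subgroup.mem_bot] at this
      exact Subtype.ext this
    exact (inv_mul_eq_one.mp hmem).symm
  have hsurj : Function.Surjective (fun c : C => (c : Equiv.Perm (Fin 6)) 0) := by
    intro i
    obtain ⟨c, hc, h, ⟨_, hh0⟩, heq⟩ := hfac (lam i) (lam_mem i)
    refine ⟨⟨c, hc⟩, ?_⟩
    have hh0' : h 0 = 0 := hh0
    have : c (h 0) = lam i 0 := by rw [heq]; rfl
    simpa [hh0', lam_zero] using this
  have hbij : Function.Bijective (fun c : C => (c : Equiv.Perm (Fin 6)) 0) := ⟨hinj, hsurj⟩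
  haveI : Fintype C := Fintype.ofFinite _
  have hcard : Fintype.card C = 6 := by
    rw [Fintype.card_congr (Equiv.ofBijective _ hbij)]; simp
  -- Cauchy's theorem: an element of order 2
  obtain ⟨c, hc2⟩ := exists_prime_orderOf_dvd_card (G := C) 2 (by rw [hcard]; norm_num)
  set p : Equiv.Perm (Fin 6) := (c : Equiv.Perm (Fin 6)) with hp
  have hpord : orderOf p = 2 := by rw [hp, Subgroup.orderOf_coe, hc2]
  have hpne : p ≠ 1 := by
    intro h
    rw [h, orderOf_one] at hpord
    norm_num at hpord
  -- p is fixed-point-free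
  have hfpf : ∀ x : Fin 6, p x ≠ x := by
    intro x hx
    obtain ⟨d, hd0⟩ := hsurj x
    have hfix : ((d⁻¹ * c * d : C) : Equiv.Perm (Fin 6)) 0 = 0 := by
      simp only [Subgroup.coe_mul, Subgroup.coe_inv, Equiv.Perm.mul_apply]
      simp only at hd0
      rw [hd0, ← hp, hx, ← hd0]
      exact Equiv.symm_apply_apply _ _
    have : ((d⁻¹ * c * d : C) : Equiv.Perm (Fin 6)) ∈
        C ⊓ (LMultQ6 ⊓ MulAction.stabilizer (Equiv.Perm (Fin 6)) (0 : Fin 6)) :=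
      ⟨(d⁻¹ * c * d : C).2, hCle (d⁻¹ * c * d : C).2, hfix⟩
    rw [hdisj, Subgroup.mem_bot] at this
    have hcone : c = 1 := by
      have h1 : (d⁻¹ * c * d : C) = 1 := Subtype.ext this
      have := congrArg (fun z => d * z * d⁻¹) h1
      simpa [mul_assoc] using this
    rw [hcone] at hc2
    rw [orderOf_one] at hc2
    norm_num at hc2
  -- support of p is everything
  have hsupp : p.support = Finset.univ := by
    ext x
    simp [Equiv.Perm.mem_support, hfpf x]
  -- every cycle length is 2
  have hmem2 : ∀ n ∈ p.cycleType, n = 2 := by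
    intro n hn
    have h2 : 2 ≤ n := Equiv.Perm.two_le_of_mem_cycleType hn
    have hdvd : n ∣ 2 := by
      rw [← hpord, ← Equiv.Perm.lcm_cycleType]
      exact Multiset.dvd_lcm hn
    exact Nat.dvd_prime Nat.prime_two |>.mp hdvd |>.resolve_left (by omega)
  have hsum : p.cycleType.sum = 6 := by
    rw [Equiv.Perm.sum_cycleType, hsupp]
    simp
  have hcard3 : Multiset.card p.cycleType = 3 := by
    have hrep : p.cycleType = Multiset.replicate (Multiset.card p.cycleType) 2 :=
      Multiset.eq_replicate_card.mpr hmem2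
    rw [hrep] at hsum
    simp [Multiset.sum_replicate] at hsum
    omega
  have hsign : Equiv.Perm.sign p = -1 := by
    rw [Equiv.Perm.sign_of_cycleType, hsum, hcard3]
    decide
  have hsign1 : Equiv.Perm.sign p = 1 :=
    Equiv.Perm.mem_alternatingGroup.mp (hA6 (hCle c.2))
  rw [hsign1] at hsign
  exact absurd hsign (by decide)
end

section
/- Let n > 2 with n ≡ 2 (mod 4), and let Q be a quasigroup on {1,…,n} all of whose left translations λ_ℓ are even permutations. Then in G = LMult(Q), the stabilizer G_c of any point c has no complement in G. -/
/-- The left multiplication group of a quasigroup `(Q, op)`. -/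
def LMultGrp {Q : Type*} (op : Q → Q → Q) : Subgroup (Equiv.Perm Q) :=
  Subgroup.closure {σ : Equiv.Perm Q | ∃ ℓ : Q, ∀ q : Q, σ q = op ℓ q}

theorem stabilizer_has_no_complement_in_lmult (n : ℕ) (hn : 2 < n) (h4 : n % 4 = 2)
    (op : Fin n → Fin n → Fin n)
    (hl : ∀ a : Fin n, Function.Bijective (fun x : Fin n => op a x))
    (hr : ∀ a : Fin n, Function.Bijective (fun x : Fin n => op x a))
    (heven : ∀ σ : Equiv.Perm (Fin n),
      (∃ ℓ : Fin n, ∀ q : Fin n, σ q = op ℓ q) → σ ∈ alternatingGroup (Fin n))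
    (c : Fin n) :
    ¬ ∃ C : Subgroup (Equiv.Perm (Fin n)),
        C ≤ LMultGrp op ∧
        (∀ g ∈ LMultGrp op, ∃ c' ∈ C,
          ∃ h ∈ LMultGrp op ⊓ MulAction.stabilizer (Equiv.Perm (Fin n)) c,
            g = c' * h) ∧
        C ⊓ (LMultGrp op ⊓ MulAction.stabilizer (Equiv.Perm (Fin n)) c) = ⊥ := by
  rintro ⟨C, hCle, hfact, hbot⟩
  classical
  -- LMult ≤ alternating group
  have halt : LMultGrp op ≤ alternatingGroup (Fin n) :=
    (Subgroup.closure_le _).2 (fun σ hσ => heven σ hσ)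
  -- freeness: any element of C fixing c is 1
  have hfree : ∀ x : Equiv.Perm (Fin n), x ∈ C → x c = c → x = 1 := by
    intro x hx hxc
    have : x ∈ C ⊓ (LMultGrp op ⊓ MulAction.stabilizer (Equiv.Perm (Fin n)) c) :=
      ⟨hx, hCle hx, hxc⟩
    rw [hbot] at this
    exact this
  -- transitivity: for every x there is an element of C sending c to x
  have htrans : ∀ x : Fin n, ∃ g ∈ C, g c = x := by
    intro x
    obtain ⟨ℓ, hℓ⟩ := (hr c).2 x
    let σ : Equiv.Perm (Fin n) := Equiv.ofBijective _ (hl ℓ)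
    have hσmem : σ ∈ LMultGrp op := Subgroup.subset_closure ⟨ℓ, fun q => rfl⟩
    obtain ⟨c', hc', h, hh, hgh⟩ := hfact σ hσmem
    refine ⟨c', hc', ?_⟩
    have hhc : h c = c := hh.2
    have : σ c = op ℓ c := rfl
    have hcx : σ c = x := by rw [this]; exact hℓ
    calc c' c = c' (h c) := by rw [hhc]
      _ = (c' * h) c := rfl
      _ = x := by rw [← hgh]; exact hcx
  -- the evaluation map C → Fin n is bijective
  have hbij : Function.Bijective (fun g : C => (g : Equiv.Perm (Fin n)) c) := by
    constructor
    · intro a b hab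
      have hfix : ((b : Equiv.Perm (Fin n))⁻¹ * (a : Equiv.Perm (Fin n))) c = c := by
        simp only at hab
        simp [Equiv.Perm.mul_apply, hab]
      have h1 : ((b : Equiv.Perm (Fin n))⁻¹ * (a : Equiv.Perm (Fin n))) = 1 :=
        hfree _ (mul_mem (inv_mem b.2) a.2) hfix
      have h2 : (a : Equiv.Perm (Fin n)) = b := by
        have h3 := congrArg (fun z => (b : Equiv.Perm (Fin n)) * z) h1
        simpa [← mul_assoc] using h3
      exact Subtype.ext h2
    · intro x
      obtain ⟨g, hg, hgc⟩ := htrans x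
      exact ⟨⟨g, hg⟩, hgc⟩
  haveI : Fintype C := Fintype.ofFinite C
  have hcard : Fintype.card C = n := by
    rw [Fintype.card_of_bijective hbij, Fintype.card_fin]
  -- Cauchy: element of order 2 in C
  haveI : Fact (Nat.Prime 2) := ⟨Nat.prime_two⟩
  obtain ⟨g, hg2⟩ := exists_prime_orderOf_dvd_card (G := C) 2 (by omega)
  set σ : Equiv.Perm (Fin n) := (g : Equiv.Perm (Fin n)) with hσdef
  have hσord : orderOf σ = 2 := by
    rw [hσdef, Subgroup.orderOf_coe, hg2]
  have hσne : σ ≠ 1 := by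
    intro h; rw [h, orderOf_one] at hσord; omega
  -- σ is fixed-point free
  have hfpf : ∀ x : Fin n, σ x ≠ x := by
    intro x hx
    obtain ⟨t, ht, htc⟩ := htrans x
    have hinv : t⁻¹ x = c := by rw [← htc]; exact Equiv.symm_apply_apply t c
    have key : (t⁻¹ * σ * t) c = c := by
      simp [Equiv.Perm.mul_apply, htc, hx, hinv]
    have : t⁻¹ * σ * t = 1 :=
      hfree _ (mul_mem (mul_mem (inv_mem ht) g.2) ht) key
    have : σ = 1 := by
      have := congrArg (fun z => t * z * t⁻¹) this
      simpa [mul_assoc] using this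
    exact hσne this
  -- support is everything
  have hsupp : σ.support = Finset.univ := by
    ext x
    simp [Equiv.Perm.mem_support, hfpf x]
  have hsum : σ.cycleType.sum = n := by
    rw [Equiv.Perm.sum_cycleType, hsupp, Finset.card_univ, Fintype.card_fin]
  -- all cycle lengths are 2
  have hall2 : ∀ r ∈ σ.cycleType, r = 2 := by
    intro r hr'
    have h1 : r ∣ 2 := by
      have := Multiset.dvd_lcm hr'
      rwa [Equiv.Perm.lcm_cycleType, hσord] at this
    have h2 : 2 ≤ r := Equiv.Perm.two_le_of_mem_cycleType hr'
    exact Nat.le_antisymm (Nat.le_of_dvd two_pos h1) h2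
  have hrep : σ.cycleType = Multiset.replicate (Multiset.card σ.cycleType) 2 :=
    Multiset.eq_replicate_card.2 hall2
  have hsum2 : n = 2 * Multiset.card σ.cycleType := by
    conv_lhs => rw [← hsum, hrep]
    rw [Multiset.sum_replicate, smul_eq_mul, Nat.mul_comm]
  set k := Multiset.card σ.cycleType with hk
  have hkodd : Odd (n + k) := by
    rw [Nat.odd_iff]; omega
  have hsign : Equiv.Perm.sign σ = -1 := by
    rw [Equiv.Perm.sign_of_cycleType, hsum, ← hk, hkodd.neg_one_pow]
  have hσalt : σ ∈ alternatingGroup (Fin n) := halt (hCle g.2)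
  rw [Equiv.Perm.mem_alternatingGroup] at hσalt
  rw [hσalt] at hsign
  exact absurd hsign (by decide)
end

section
/- For every positive integer n, ℤ/n²ℤ admits a Cayley-Sudoku arrangement: with S = nℤ/n²ℤ the subgroup of order n, the cosets S, S+1, …, S+(n−1) and the sets Lᵢ = {in, in+1, …, in+n−1} for 0 ≤ i ≤ n−1 satisfy that for each i and j, the map Lᵢ × (S + j) → ℤ/n²ℤ, (l, c) ↦ l + c, is a bijection. -/
theorem zmod_sq_cayley_sudoku (n : ℕ) (hn : 0 < n) :
    ∀ i j : Fin n,
      Function.Bijective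
        (fun p :
            ({z : ZMod (n ^ 2) | ∃ a : Fin n, z = (((i : ℕ) * n + (a : ℕ) : ℕ) : ZMod (n ^ 2))}
              : Set (ZMod (n ^ 2))) ×
            ({z : ZMod (n ^ 2) | ∃ s : Fin n, z = (((s : ℕ) * n + (j : ℕ) : ℕ) : ZMod (n ^ 2))}
              : Set (ZMod (n ^ 2))) =>
          (p.1 : ZMod (n ^ 2)) + (p.2 : ZMod (n ^ 2))) := by
  intro i j
  have hn2 : (0:ℕ) < n ^ 2 := by positivity
  haveI : NeZero (n ^ 2) := ⟨hn2.ne'⟩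
  have key : ∀ x y : ℕ, x < n ^ 2 → y < n ^ 2 → ((x : ZMod (n ^ 2)) = y) → x = y := by
    intro x y hx hy h
    have := (ZMod.natCast_eq_natCast_iff _ _ _).mp h
    rwa [Nat.ModEq, Nat.mod_eq_of_lt hx, Nat.mod_eq_of_lt hy] at this
  have hbound : ∀ (k a : Fin n), (k : ℕ) * n + (a : ℕ) < n ^ 2 := by
    intro k a
    calc (k : ℕ) * n + (a : ℕ) < (k : ℕ) * n + n := by omega
    _ = ((k : ℕ) + 1) * n := by ring
    _ ≤ n * n := Nat.mul_le_mul_right n k.isLt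
    _ = n ^ 2 := (sq n).symm
  set f1 : Fin n → ZMod (n ^ 2) := fun a => (((i : ℕ) * n + (a : ℕ) : ℕ) : ZMod (n ^ 2)) with hf1
  set f2 : Fin n → ZMod (n ^ 2) := fun s => (((s : ℕ) * n + (j : ℕ) : ℕ) : ZMod (n ^ 2)) with hf2
  have hf1inj : Function.Injective f1 := by
    intro a a' h
    have := key _ _ (hbound i a) (hbound i a') h
    exact Fin.ext (by omega)
  have hf2inj : Function.Injective f2 := by
    intro s s' h
    have h2 := key _ _ (hbound s j) (hbound s' j) h
    have : (s : ℕ) * n = (s' : ℕ) * n := by omega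
    exact Fin.ext (Nat.eq_of_mul_eq_mul_right hn this)
  have hA : {z : ZMod (n ^ 2) | ∃ a : Fin n, z = (((i : ℕ) * n + (a : ℕ) : ℕ) : ZMod (n ^ 2))}
      = Set.range f1 := by
    ext z; simp [Set.range, eq_comm, hf1]
  have hB : {z : ZMod (n ^ 2) | ∃ s : Fin n, z = (((s : ℕ) * n + (j : ℕ) : ℕ) : ZMod (n ^ 2))}
      = Set.range f2 := by
    ext z; simp [Set.range, eq_comm, hf2]
  rw [Nat.bijective_iff_injective_and_card]
  constructor
  · rintro ⟨⟨z1, a, hz1⟩, ⟨z2, s, hz2⟩⟩ ⟨⟨w1, a', hw1⟩, ⟨w2, s', hw2⟩⟩ h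
    simp only [hz1, hz2, hw1, hw2] at h
    rw [← Nat.cast_add, ← Nat.cast_add] at h
    have hm : ((i : ℕ) * n + (a : ℕ) + ((s : ℕ) * n + (j : ℕ)))
        ≡ ((i : ℕ) * n + (a' : ℕ) + ((s' : ℕ) * n + (j : ℕ))) [MOD n ^ 2] :=
      (ZMod.natCast_eq_natCast_iff _ _ _).mp h
    have e1 : (i : ℕ) * n + (a : ℕ) + ((s : ℕ) * n + (j : ℕ))
        = ((i : ℕ) * n + (j : ℕ)) + ((a : ℕ) + (s : ℕ) * n) := by ring
    have e2 : (i : ℕ) * n + (a' : ℕ) + ((s' : ℕ) * n + (j : ℕ))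
        = ((i : ℕ) * n + (j : ℕ)) + ((a' : ℕ) + (s' : ℕ) * n) := by ring
    rw [e1, e2] at hm
    have h1 : ((a : ℕ) + (s : ℕ) * n) ≡ ((a' : ℕ) + (s' : ℕ) * n) [MOD n ^ 2] :=
      Nat.ModEq.add_left_cancel' _ hm
    have hdvd : n ∣ n ^ 2 := dvd_pow_self n two_ne_zero
    have h2 : ((a : ℕ) + (s : ℕ) * n) ≡ ((a' : ℕ) + (s' : ℕ) * n) [MOD n] := h1.of_dvd hdvd
    have h3 : (a : ℕ) % n = (a' : ℕ) % n := by
      have := h2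
      unfold Nat.ModEq at this
      rwa [Nat.add_mul_mod_self_right, Nat.add_mul_mod_self_right] at this
    have haa : (a : ℕ) = (a' : ℕ) := by
      rwa [Nat.mod_eq_of_lt a.isLt, Nat.mod_eq_of_lt a'.isLt] at h3
    rw [haa] at h1
    have h4 : ((s : ℕ) * n) ≡ ((s' : ℕ) * n) [MOD n ^ 2] := Nat.ModEq.add_left_cancel' _ h1
    rw [sq] at h4
    have h5 : (s : ℕ) ≡ (s' : ℕ) [MOD n] := Nat.ModEq.mul_right_cancel' hn.ne' h4
    have hss : (s : ℕ) = (s' : ℕ) := by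
      have := h5
      unfold Nat.ModEq at this
      rwa [Nat.mod_eq_of_lt s.isLt, Nat.mod_eq_of_lt s'.isLt] at this
    have : z1 = w1 := by rw [hz1, hw1, haa]
    have : z2 = w2 := by rw [hz2, hw2, hss]
    ext <;> simp_all
  · rw [hA, hB]
    rw [Nat.card_prod, Nat.card_range_of_injective hf1inj, Nat.card_range_of_injective hf2inj,
      Nat.card_zmod]
    simp [sq]
end
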